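/- The convex hull of H_B (taken in ℝ^n × ℝ) equals the set of pairs (x, z) with 0 ≤ x_i ≤ 1 for all i, z ≥ 0, and, for every permutation τ of {1,…,n}, √σ + ∑_{k=1}^n π^σ_{τ,k} · x_{τ(k)} ≤ z. -/

import Mathlib

open Finset

lemma sqrt_diff_le (u v d : ℝ) (hu : 0 ≤ u) (huv : u ≤ v) (hd : 0 ≤ d) :
    Real.sqrt (v + d) - Real.sqrt v ≤ Real.sqrt (u + d) - Real.sqrt u := by
  rcases eq_or_lt_of_le hd with h | h
  · simp [← h]
  have hv : 0 ≤ v := hu.trans huv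
  have h1 : Real.sqrt u ^ 2 = u := Real.sq_sqrt hu
  have h2 : Real.sqrt v ^ 2 = v := Real.sq_sqrt hv
  have h3 : Real.sqrt (u + d) ^ 2 = u + d := Real.sq_sqrt (by linarith)
  have h4 : Real.sqrt (v + d) ^ 2 = v + d := Real.sq_sqrt (by linarith)
  have h5 : Real.sqrt u ≤ Real.sqrt v := Real.sqrt_le_sqrt huv
  have h6 : Real.sqrt (u + d) ≤ Real.sqrt (v + d) := Real.sqrt_le_sqrt (by linarith)
  have h7 : 0 ≤ Real.sqrt u := Real.sqrt_nonneg u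
  have h8 : 0 < Real.sqrt (u + d) := Real.sqrt_pos.2 (by linarith)
  have h9 : Real.sqrt v ≤ Real.sqrt (v + d) := Real.sqrt_le_sqrt (by linarith)
  have e1 : (Real.sqrt (v+d) - Real.sqrt v) * (Real.sqrt (v+d) + Real.sqrt v) = d := by
    nlinarith
  have e2 : (Real.sqrt (u+d) - Real.sqrt u) * (Real.sqrt (u+d) + Real.sqrt u) = d := by
    nlinarith
  have p1 : (Real.sqrt (v+d) - Real.sqrt v) * (Real.sqrt (u+d) + Real.sqrt u)
      ≤ (Real.sqrt (v+d) - Real.sqrt v) * (Real.sqrt (v+d) + Real.sqrt v) :=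
    mul_le_mul_of_nonneg_left (add_le_add h6 h5) (by linarith)
  have hpos : 0 < Real.sqrt (u+d) + Real.sqrt u := by linarith
  have := (mul_le_mul_iff_of_pos_right hpos).1 (by linarith :
    (Real.sqrt (v+d) - Real.sqrt v) * (Real.sqrt (u+d) + Real.sqrt u)
      ≤ (Real.sqrt (u+d) - Real.sqrt u) * (Real.sqrt (u+d) + Real.sqrt u))
  linarith

lemma submod (σ : ℝ) (hσ : 0 ≤ σ) (b t : ℕ → ℝ) (hb : ∀ k, 0 ≤ b k)
    (ht : ∀ k, t k = 0 ∨ t k = 1) (m : ℕ) :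
    Real.sqrt σ + ∑ k ∈ range m,
      (Real.sqrt (σ + ∑ j ∈ range (k+1), b j) - Real.sqrt (σ + ∑ j ∈ range k, b j)) * t k
      ≤ Real.sqrt (σ + ∑ k ∈ range m, b k * t k) := by
  induction m with
  | zero => simp
  | succ m ih =>
    have hbt : ∀ k, 0 ≤ b k * t k ∧ b k * t k ≤ b k := by
      intro k; rcases ht k with h | h <;> simp [h, hb k]
    have hA : 0 ≤ ∑ k ∈ range m, b k * t k := sum_nonneg fun k _ => (hbt k).1
    have hAB : ∑ k ∈ range m, b k * t k ≤ ∑ k ∈ range m, b k :=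
      sum_le_sum fun k _ => (hbt k).2
    rw [Finset.sum_range_succ (f := fun k => b k * t k)]
    rw [Finset.sum_range_succ (f := fun k =>
      (Real.sqrt (σ + ∑ j ∈ range (k+1), b j) - Real.sqrt (σ + ∑ j ∈ range k, b j)) * t k)]
    rcases ht m with h | h
    · simpa [h] using ih
    · simp only [h, mul_one]
      have key := sqrt_diff_le (σ + ∑ k ∈ range m, b k * t k) (σ + ∑ k ∈ range m, b k)
        (b m) (by linarith) (by linarith) (hb m)
      have e1 : σ + ∑ k ∈ range m, b k + b m = σ + ∑ j ∈ range (m+1), b j := by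
        rw [sum_range_succ]; ring
      rw [e1] at key
      have e2 : σ + (∑ k ∈ range m, b k * t k + b m) =
          σ + ∑ k ∈ range m, b k * t k + b m := by ring
      rw [e2]
      linarith

lemma abel_sum (a G : ℕ → ℝ) (N : ℕ) :
    ∑ j ∈ range (N+1), (a j - a (j+1)) * G j
      = a 0 * G 0 - a (N+1) * G N + ∑ k ∈ range N, (G (k+1) - G k) * a (k+1) := by
  induction N with
  | zero => simp; ring
  | succ N ih =>
    rw [sum_range_succ, ih, sum_range_succ]; ring

lemma ind_sum (a : ℕ → ℝ) (k : ℕ) (N : ℕ) :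
    ∑ j ∈ range N, (a j - a (j+1)) * (if k < j then 1 else 0)
      = if k + 1 ≤ N then a (k+1) - a N else 0 := by
  induction N with
  | zero => simp
  | succ N ih =>
    rw [sum_range_succ, ih]
    by_cases h1 : k + 1 ≤ N
    · rw [if_pos h1, if_pos (show k < N by omega), if_pos (show k + 1 ≤ N + 1 by omega)]; ring
    · rw [if_neg h1, if_neg (show ¬ k < N by omega)]
      by_cases h2 : k + 1 ≤ N + 1
      · have hk : k = N := by omega
        subst hk; rw [if_pos h2]; ring
      · rw [if_neg h2]; ring

lemma sum_dite_range (n : ℕ) (g : Fin n → ℝ) (m : ℕ) :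
    ∑ j ∈ range m, (if h : j < n then g ⟨j,h⟩ else 0)
      = ∑ j ∈ Finset.univ.filter (fun j : Fin n => (j:ℕ) < m), g j := by
  induction m with
  | zero => simp
  | succ m ih =>
    rw [sum_range_succ, ih]
    by_cases h : m < n
    · rw [dif_pos h]
      have he : Finset.univ.filter (fun j : Fin n => (j:ℕ) < m + 1)
          = insert (⟨m, h⟩ : Fin n) (Finset.univ.filter (fun j : Fin n => (j:ℕ) < m)) := by
        ext j; simp [Fin.ext_iff]; omega
      rw [he, Finset.sum_insert (by simp)]
      ring
    · rw [dif_neg h]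
      have he : Finset.univ.filter (fun j : Fin n => (j:ℕ) < m + 1)
          = Finset.univ.filter (fun j : Fin n => (j:ℕ) < m) := by
        ext j; simp; omega
      rw [he]; ring

lemma filter_eq_Iio (n : ℕ) (k : Fin n) :
    Finset.univ.filter (fun j : Fin n => (j:ℕ) < (k:ℕ)) = Finset.Iio k := by
  ext j
  simp only [Finset.mem_filter, Finset.mem_univ, true_and, Finset.mem_Iio, Fin.lt_iff_val_lt_val]

lemma filter_eq_Iic (n : ℕ) (k : Fin n) :
    Finset.univ.filter (fun j : Fin n => (j:ℕ) < (k:ℕ) + 1) = Finset.Iic k := by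
  ext j
  simp only [Finset.mem_filter, Finset.mem_univ, true_and, Finset.mem_Iic, Fin.le_iff_val_le_val]
  omega

lemma fin_sum_to_range (n : ℕ) (g : Fin n → ℝ) :
    ∑ k : Fin n, g k = ∑ k ∈ range n, (if h : k < n then g ⟨k,h⟩ else 0) := by
  rw [sum_dite_range]
  apply Finset.sum_congr _ (fun _ _ => rfl)
  ext j; simp [j.isLt]

lemma iio_to_range (n : ℕ) (g : Fin n → ℝ) (k : Fin n) :
    ∑ j ∈ Finset.Iio k, g j = ∑ j ∈ range (k:ℕ), (if h : j < n then g ⟨j,h⟩ else 0) := by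
  rw [sum_dite_range, filter_eq_Iio]

lemma iic_to_range (n : ℕ) (g : Fin n → ℝ) (k : Fin n) :
    ∑ j ∈ Finset.Iic k, g j = ∑ j ∈ range ((k:ℕ)+1), (if h : j < n then g ⟨j,h⟩ else 0) := by
  rw [sum_dite_range, filter_eq_Iic]

theorem convexHull_HB
    (n : ℕ) (σ : ℝ) (hσ : 0 ≤ σ) (c : Fin n → ℝ) (hc : ∀ i, 0 < c i) :
    convexHull ℝ {p : (Fin n → ℝ) × ℝ | (∀ i, p.1 i = 0 ∨ p.1 i = 1) ∧ 0 ≤ p.2 ∧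
        Real.sqrt (σ + ∑ i, c i * p.1 i) ≤ p.2} =
      {p : (Fin n → ℝ) × ℝ | (∀ i, 0 ≤ p.1 i ∧ p.1 i ≤ 1) ∧ 0 ≤ p.2 ∧
        ∀ τ : Equiv.Perm (Fin n),
          Real.sqrt σ +
            ∑ k, (Real.sqrt (σ + ∑ j ∈ Finset.Iic k, c (τ j)) -
                  Real.sqrt (σ + ∑ j ∈ Finset.Iio k, c (τ j))) * p.1 (τ k) ≤ p.2} := by
  set S : Set ((Fin n → ℝ) × ℝ) := {p | (∀ i, p.1 i = 0 ∨ p.1 i = 1) ∧ 0 ≤ p.2 ∧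
        Real.sqrt (σ + ∑ i, c i * p.1 i) ≤ p.2} with hS
  set T : Set ((Fin n → ℝ) × ℝ) := {p | (∀ i, 0 ≤ p.1 i ∧ p.1 i ≤ 1) ∧ 0 ≤ p.2 ∧
        ∀ τ : Equiv.Perm (Fin n),
          Real.sqrt σ +
            ∑ k, (Real.sqrt (σ + ∑ j ∈ Finset.Iic k, c (τ j)) -
                  Real.sqrt (σ + ∑ j ∈ Finset.Iio k, c (τ j))) * p.1 (τ k) ≤ p.2} with hT
  -- key: for any permutation τ and 0/1 vector facts, translate sums to range sums
  apply Set.Subset.antisymm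
  · -- convexHull S ⊆ T
    apply convexHull_min
    · -- S ⊆ T
      rintro p ⟨hbin, hz, hle⟩
      refine ⟨fun i => by rcases hbin i with h | h <;> simp [h], hz, fun τ => ?_⟩
      set b : ℕ → ℝ := fun k => if h : k < n then c (τ ⟨k,h⟩) else 0 with hb
      set t : ℕ → ℝ := fun k => if h : k < n then p.1 (τ ⟨k,h⟩) else 0 with htdef
      have hbnn : ∀ k, 0 ≤ b k := by
        intro k; simp only [hb]; split_ifs with h
        · exact (hc _).le
        · exact le_refl 0
      have ht01 : ∀ k, t k = 0 ∨ t k = 1 := by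
        intro k; simp only [htdef]; split_ifs with h
        · exact hbin _
        · exact Or.inl rfl
      have key := submod σ hσ b t hbnn ht01 n
      have e1 : ∑ k : Fin n, (Real.sqrt (σ + ∑ j ∈ Finset.Iic k, c (τ j)) -
                  Real.sqrt (σ + ∑ j ∈ Finset.Iio k, c (τ j))) * p.1 (τ k)
          = ∑ k ∈ range n,
            (Real.sqrt (σ + ∑ j ∈ range (k+1), b j) - Real.sqrt (σ + ∑ j ∈ range k, b j)) * t k := by
        rw [fin_sum_to_range]
        apply Finset.sum_congr rfl
        intro k hk
        have hkn : k < n := mem_range.1 hk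
        rw [dif_pos hkn]
        rw [iic_to_range n (fun j => c (τ j)), iio_to_range n (fun j => c (τ j))]
        simp only [htdef, dif_pos hkn]
        rfl
      have e2 : ∑ i, c i * p.1 i = ∑ k ∈ range n, b k * t k := by
        rw [← Equiv.sum_comp τ (fun i => c i * p.1 i)]
        rw [fin_sum_to_range]
        apply Finset.sum_congr rfl
        intro k hk
        have hkn : k < n := mem_range.1 hk
        simp only [hb, htdef, dif_pos hkn]
      rw [e1]
      rw [e2] at hle
      linarith
    · -- T convex
      rintro p hp q hq α β hα hβ hαβ
      obtain ⟨hpb, hpz, hpi⟩ := hp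
      obtain ⟨hqb, hqz, hqi⟩ := hq
      refine ⟨fun i => ?_, ?_, fun τ => ?_⟩
      · simp only [Prod.fst_add, Prod.smul_fst, Pi.add_apply, Pi.smul_apply, smul_eq_mul]
        constructor
        · nlinarith [(hpb i).1, (hqb i).1]
        · nlinarith [(hpb i).2, (hqb i).2]
      · simp only [Prod.snd_add, Prod.smul_snd, smul_eq_mul]
        nlinarith
      · simp only [Prod.fst_add, Prod.smul_fst, Prod.snd_add, Prod.smul_snd, Pi.add_apply,
          Pi.smul_apply, smul_eq_mul]
        have hrw : ∑ k, (Real.sqrt (σ + ∑ j ∈ Finset.Iic k, c (τ j)) -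
                  Real.sqrt (σ + ∑ j ∈ Finset.Iio k, c (τ j))) * (α * p.1 (τ k) + β * q.1 (τ k))
            = α * ∑ k, (Real.sqrt (σ + ∑ j ∈ Finset.Iic k, c (τ j)) -
                  Real.sqrt (σ + ∑ j ∈ Finset.Iio k, c (τ j))) * p.1 (τ k)
              + β * ∑ k, (Real.sqrt (σ + ∑ j ∈ Finset.Iic k, c (τ j)) -
                  Real.sqrt (σ + ∑ j ∈ Finset.Iio k, c (τ j))) * q.1 (τ k) := by
          rw [Finset.mul_sum, Finset.mul_sum, ← Finset.sum_add_distrib]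
          exact Finset.sum_congr rfl fun k _ => by ring
        rw [hrw]
        have h1 := mul_le_mul_of_nonneg_left (hpi τ) hα
        have h2 := mul_le_mul_of_nonneg_left (hqi τ) hβ
        have hs : α * Real.sqrt σ + β * Real.sqrt σ = Real.sqrt σ := by
          rw [← add_mul, hαβ, one_mul]
        nlinarith [h1, h2]
  · -- T ⊆ convexHull S
    rintro p ⟨hbox, hz, hineq⟩
    set x : Fin n → ℝ := p.1 with hx
    set z : ℝ := p.2 with hzdef
    set τ : Equiv.Perm (Fin n) := Tuple.sort (fun i => -x i) with hτ
    have hanti : ∀ k l : Fin n, k ≤ l → x (τ l) ≤ x (τ k) := by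
      intro k l hkl
      have := Tuple.monotone_sort (fun i => -x i) hkl
      simp only [Function.comp_apply] at this
      linarith
    set b : ℕ → ℝ := fun k => if h : k < n then c (τ ⟨k,h⟩) else 0 with hb
    set a : ℕ → ℝ := fun j => if j = 0 then 1 else if h : j - 1 < n then x (τ ⟨j-1,h⟩) else 0
      with ha
    set G : ℕ → ℝ := fun m => Real.sqrt (σ + ∑ j ∈ range m, b j) with hG
    set E : ℝ := z - (Real.sqrt σ +
      ∑ k, (Real.sqrt (σ + ∑ j ∈ Finset.Iic k, c (τ j)) -
            Real.sqrt (σ + ∑ j ∈ Finset.Iio k, c (τ j))) * x (τ k)) with hE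
    have hEnn : 0 ≤ E := by
      have := hineq τ
      simp only [hE]
      linarith
    have hbnn : ∀ k, 0 ≤ b k := by
      intro k; simp only [hb]; split_ifs with h
      · exact (hc _).le
      · exact le_refl 0
    have hGnn : ∀ m, 0 ≤ G m := fun m => Real.sqrt_nonneg _
    have ha0 : a 0 = 1 := by simp [ha]
    have hatop : a (n+1) = 0 := by simp [ha]
    have hak : ∀ k (h : k < n), a (k+1) = x (τ ⟨k, h⟩) := by
      intro k h
      simp only [ha, Nat.add_sub_cancel, if_neg (Nat.succ_ne_zero k), dif_pos h]
    have hamono : ∀ j : ℕ, a (j+1) ≤ a j := by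
      intro j
      rcases Nat.eq_zero_or_pos j with rfl | hj
      · show a 1 ≤ a 0
        rw [ha0]
        simp only [ha, if_neg one_ne_zero]
        split_ifs with h
        · exact (hbox _).2
        · exact zero_le_one
      · simp only [ha, if_neg (by omega : ¬ j + 1 = 0), if_neg (by omega : ¬ j = 0),
          Nat.add_sub_cancel]
        split_ifs with h1 h2 h2
        · exact hanti ⟨j-1, by omega⟩ ⟨j, by omega⟩ (by simp only [Fin.mk_le_mk]; omega)
        · exact absurd (by omega : j - 1 < n) h2
        · exact (hbox _).1
        · exact le_refl 0
    set w : ℕ → ℝ := fun j => a j - a (j+1) with hw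
    set v : ℕ → (Fin n → ℝ) × ℝ :=
      fun j => (fun i => if ((τ.symm i : ℕ)) < j then 1 else 0, G j + E) with hv
    have hwnn : ∀ j, 0 ≤ w j := fun j => sub_nonneg.2 (hamono j)
    have hsum1 : ∑ j ∈ range (n+1), w j = 1 := by
      simp only [hw]
      rw [Finset.sum_range_sub' a (n+1)]
      rw [ha0, hatop]; ring
    -- each vertex is in S
    have hvS : ∀ j ∈ range (n+1), v j ∈ S := by
      intro j hj
      have hjn : j ≤ n := by have := mem_range.1 hj; omega
      have hsum : ∑ i, c i * (v j).1 i = ∑ k ∈ range j, b k := by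
        rw [← Equiv.sum_comp τ (fun i => c i * (v j).1 i)]
        have e0 : ∀ k : Fin n, c (τ k) * (v j).1 (τ k)
            = c (τ k) * (if (k:ℕ) < j then 1 else 0) := by
          intro k
          simp only [hv, Equiv.symm_apply_apply]
        rw [Finset.sum_congr rfl (fun k _ => e0 k)]
        rw [fin_sum_to_range n (fun k => c (τ k) * (if (k:ℕ) < j then 1 else 0))]
        have e1 : ∀ k ∈ range n, (if h : k < n then
              c (τ ⟨k, h⟩) * (if ((⟨k, h⟩ : Fin n) : ℕ) < j then 1 else 0) else 0)
            = if k < j then b k else 0 := by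
          intro k hk
          have hkn : k < n := mem_range.1 hk
          rw [dif_pos hkn]
          simp only [hb, dif_pos hkn]
          split_ifs with h2 <;> ring
        rw [Finset.sum_congr rfl e1, ← Finset.sum_filter]
        apply Finset.sum_congr _ (fun _ _ => rfl)
        ext m
        simp only [mem_filter, mem_range]
        omega
      simp only [hS, Set.mem_setOf_eq]
      refine ⟨fun i => ?_, ?_, ?_⟩
      · simp only [hv]; split_ifs <;> simp
      · have := hGnn j; linarith
      · have heq : Real.sqrt (σ + ∑ i, c i * (v j).1 i) = G j := by
          rw [hsum]
        have h2 : Real.sqrt (σ + ∑ i, c i * (v j).1 i) ≤ G j + E := by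
          rw [heq]; linarith
        exact h2
    have hcm : (range (n+1)).centerMass w v = p := by
      rw [Finset.centerMass_eq_of_sum_1 _ _ hsum1]
      have hfst : (∑ j ∈ range (n+1), w j • v j).1 = p.1 := by
        rw [Prod.fst_sum]
        funext i
        rw [Finset.sum_apply]
        have e0 : ∀ j, (w j • v j).1 i = w j * (if ((τ.symm i : ℕ)) < j then 1 else 0) := by
          intro j
          simp only [hv, Prod.smul_fst, Pi.smul_apply, smul_eq_mul]
        rw [Finset.sum_congr rfl (fun j _ => e0 j)]
        rw [ind_sum a (τ.symm i) (n+1)]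
        rw [if_pos (by have := (τ.symm i).isLt; omega)]
        rw [hatop, hak _ (τ.symm i).isLt]
        simp only [Fin.eta, Equiv.apply_symm_apply]
        rw [sub_zero]
      have hsnd : (∑ j ∈ range (n+1), w j • v j).2 = p.2 := by
        rw [Prod.snd_sum]
        have e0 : ∀ j, (w j • v j).2 = w j * G j + w j * E := by
          intro j
          simp only [hv, Prod.smul_snd, smul_eq_mul]
          ring
        rw [Finset.sum_congr rfl (fun j _ => e0 j), Finset.sum_add_distrib, ← Finset.sum_mul,
          hsum1, one_mul]
        have habel : ∑ j ∈ range (n+1), w j * G j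
            = a 0 * G 0 - a (n+1) * G n + ∑ k ∈ range n, (G (k+1) - G k) * a (k+1) := by
          simp only [hw]
          exact abel_sum a G n
        rw [habel, ha0, hatop, one_mul]
        have hG0 : G 0 = Real.sqrt σ := by simp [hG]
        have hmain : ∑ k ∈ range n, (G (k+1) - G k) * a (k+1)
            = ∑ k, (Real.sqrt (σ + ∑ j ∈ Finset.Iic k, c (τ j)) -
                  Real.sqrt (σ + ∑ j ∈ Finset.Iio k, c (τ j))) * x (τ k) := by
          rw [fin_sum_to_range n (fun k => (Real.sqrt (σ + ∑ j ∈ Finset.Iic k, c (τ j)) -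
                  Real.sqrt (σ + ∑ j ∈ Finset.Iio k, c (τ j))) * x (τ k))]
          apply Finset.sum_congr rfl
          intro k hk
          have hkn : k < n := mem_range.1 hk
          rw [dif_pos hkn]
          rw [iic_to_range n (fun j => c (τ j)), iio_to_range n (fun j => c (τ j))]
          rw [hak k hkn]
        rw [hmain, hG0]
        simp only [hE]
        ring
      exact Prod.ext hfst hsnd
    rw [← hcm]
    exact Finset.centerMass_mem_convexHull _ (fun j _ => hwnn j)
      (by rw [hsum1]; norm_num) hvS
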